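/- For n = k ≥ 2, the total n-cut complex of the 2×n grid graph has exactly two facets, namely the two alternating (checkerboard) transversals {a_1, b_2, a_3, ...} and {b_1, a_2, b_3, ...}, and these facets are disjoint; hence Δₙᵗ(G_{2×n}) is homotopy equivalent to S⁰. -/

import Mathlib

open Finset

attribute [local instance] Classical.propDecidable

variable {V : Type*}

def gridGraph (m n : ℕ) : SimpleGraph (Fin m × Fin n) where
  Adj u v := (u.1 = v.1 ∧ (u.2.1 + 1 = v.2.1 ∨ v.2.1 + 1 = u.2.1)) ∨
             (u.2 = v.2 ∧ (u.1.1 + 1 = v.1.1 ∨ v.1.1 + 1 = u.1.1))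
  symm := by
    constructor
    intro u v h
    rcases h with ⟨h1, h2⟩ | ⟨h1, h2⟩
    · exact Or.inl ⟨h1.symm, h2.symm⟩
    · exact Or.inr ⟨h1.symm, h2.symm⟩
  loopless := by
    constructor
    intro u h
    rcases h with ⟨-, h | h⟩ | ⟨-, h | h⟩ <;> omega

def IsIndep (G : SimpleGraph V) (S : Finset V) : Prop := ∀ u ∈ S, ∀ v ∈ S, ¬ G.Adj u v

def totalCutComplex [Fintype V] (G : SimpleGraph V) (k : ℕ) : Set (Finset V) :=
  {σ | ∃ S : Finset V, S ⊆ σᶜ ∧ S.card = k ∧ IsIndep G S}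

def cutComplex [Fintype V] (G : SimpleGraph V) (k : ℕ) : Set (Finset V) :=
  {σ | ∃ S : Finset V, S ⊆ σᶜ ∧ S.card = k ∧ ¬ (G.induce (S : Set V)).Connected}

def linkC (K : Set (Finset V)) (W : Finset V) : Set (Finset V) :=
  {τ | τ ∩ W = ∅ ∧ τ ∪ W ∈ K}

def delC (K : Set (Finset V)) (v : V) : Set (Finset V) := {σ ∈ K | v ∉ σ}

def starC (K : Set (Finset V)) (F : Finset V) : Set (Finset V) := {σ ∈ K | σ ∪ F ∈ K}

def IsFacet (K : Set (Finset V)) (σ : Finset V) : Prop :=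
  σ ∈ K ∧ ∀ τ ∈ K, σ ⊆ τ → σ = τ

def geomReal [Fintype V] (K : Set (Finset V)) : Set (V → ℝ) :=
  {f | (∀ v, 0 ≤ f v) ∧ (∑ v, f v) = 1 ∧ ∃ σ ∈ K, ∀ v, f v ≠ 0 → v ∈ σ}

def nSphere (d : ℕ) : Set (EuclideanSpace ℝ (Fin (d + 1))) := Metric.sphere 0 1

noncomputable def spherePt (d : ℕ) : ↥(nSphere d) :=
  ⟨EuclideanSpace.single 0 1, by simp [nSphere, EuclideanSpace.norm_single]⟩

def wedgeRel (N d : ℕ) (a b : (Σ _ : Fin N, ↥(nSphere d)) ⊕ Unit) : Prop :=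
  a = b ∨ ((a = Sum.inr () ∨ ∃ i, a = Sum.inl ⟨i, spherePt d⟩) ∧
           (b = Sum.inr () ∨ ∃ i, b = Sum.inl ⟨i, spherePt d⟩))

def wedgeOfSpheres (N d : ℕ) : Type := Quot (wedgeRel N d)

noncomputable instance (N d : ℕ) : TopologicalSpace (wedgeOfSpheres N d) := by
  unfold wedgeOfSpheres; infer_instance


open Finset
attribute [local instance] Classical.propDecidable

def Av (n : ℕ) : Finset (Fin 2 × Fin n) :=
  Finset.univ.filter (fun v : Fin 2 × Fin n => (v.1.1 + v.2.1) % 2 = 0)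
def Bv (n : ℕ) : Finset (Fin 2 × Fin n) :=
  Finset.univ.filter (fun v : Fin 2 × Fin n => (v.1.1 + v.2.1) % 2 = 1)

lemma mem_Av {n : ℕ} {v : Fin 2 × Fin n} : v ∈ Av n ↔ (v.1.1 + v.2.1) % 2 = 0 := by
  simp [Av]
lemma mem_Bv {n : ℕ} {v : Fin 2 × Fin n} : v ∈ Bv n ↔ (v.1.1 + v.2.1) % 2 = 1 := by
  simp [Bv]

lemma adj_parity {n : ℕ} {u v : Fin 2 × Fin n} (h : (gridGraph 2 n).Adj u v) :
    (u.1.1 + u.2.1) % 2 ≠ (v.1.1 + v.2.1) % 2 := by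
  rcases h with ⟨h1, h2⟩ | ⟨h1, h2⟩
  · have := congrArg Fin.val h1; omega
  · have := congrArg Fin.val h1; omega

lemma indep_Av (n : ℕ) : IsIndep (gridGraph 2 n) (Av n) := by
  intro u hu v hv hadj
  exact adj_parity hadj ((mem_Av.1 hu).trans (mem_Av.1 hv).symm)

lemma indep_Bv (n : ℕ) : IsIndep (gridGraph 2 n) (Bv n) := by
  intro u hu v hv hadj
  exact adj_parity hadj ((mem_Bv.1 hu).trans (mem_Bv.1 hv).symm)

lemma card_Av (n : ℕ) : (Av n).card = n := by
  classical
  have himg : Av n = Finset.image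
      (fun k : Fin n => (((⟨k.1 % 2, by omega⟩ : Fin 2), k) : Fin 2 × Fin n)) Finset.univ := by
    ext v
    rw [mem_Av, Finset.mem_image]
    constructor
    · intro h
      refine ⟨v.2, Finset.mem_univ _, ?_⟩
      have h2 := v.1.2
      refine Prod.ext (Fin.ext ?_) rfl
      show v.2.1 % 2 = v.1.1
      omega
    · rintro ⟨k, -, rfl⟩
      show (k.1 % 2 + k.1) % 2 = 0
      omega
  rw [himg, Finset.card_image_of_injective _ (fun k k' h => congrArg Prod.snd h)]
  simp

lemma card_Bv (n : ℕ) : (Bv n).card = n := by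
  classical
  have himg : Bv n = Finset.image
      (fun k : Fin n => (((⟨(k.1 + 1) % 2, by omega⟩ : Fin 2), k) : Fin 2 × Fin n)) Finset.univ := by
    ext v
    rw [mem_Bv, Finset.mem_image]
    constructor
    · intro h
      refine ⟨v.2, Finset.mem_univ _, ?_⟩
      have h2 := v.1.2
      refine Prod.ext (Fin.ext ?_) rfl
      show (v.2.1 + 1) % 2 = v.1.1
      omega
    · rintro ⟨k, -, rfl⟩
      show ((k.1 + 1) % 2 + k.1) % 2 = 1
      omega
  rw [himg, Finset.card_image_of_injective _ (fun k k' h => congrArg Prod.snd h)]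
  simp

lemma indep_classify {n : ℕ} (hn : 2 ≤ n) (S : Finset (Fin 2 × Fin n))
    (hind : IsIndep (gridGraph 2 n) S) (hcard : S.card = n) : S = Av n ∨ S = Bv n := by
  classical
  have hfib : ∀ j : Fin n, (S.filter (fun v => v.2 = j)).card ≤ 1 := by
    intro j
    apply Finset.card_le_one.2
    intro u hu v hv
    rcases Finset.mem_filter.1 hu with ⟨huS, hu2⟩
    rcases Finset.mem_filter.1 hv with ⟨hvS, hv2⟩
    by_contra hne
    have h1 : u.1.1 ≠ v.1.1 := by
      intro h
      exact hne (Prod.ext (Fin.ext h) (hu2.trans hv2.symm))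
    have : (gridGraph 2 n).Adj u v := by
      right
      refine ⟨hu2.trans hv2.symm, ?_⟩
      have := u.1.2; have := v.1.2; omega
    exact hind u huS v hvS this
  have hsum : ∑ j : Fin n, (S.filter (fun v => v.2 = j)).card = n := by
    rw [← Finset.card_eq_sum_card_fiberwise (fun x _ => Finset.mem_univ x.2)]
    exact hcard
  have hone : ∀ j : Fin n, (S.filter (fun v => v.2 = j)).card = 1 := by
    by_contra hc
    push_neg at hc
    obtain ⟨j0, hj0⟩ := hc
    have hlt : ∑ j : Fin n, (S.filter (fun v => v.2 = j)).card < ∑ j : Fin n, 1 := by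
      apply Finset.sum_lt_sum (fun i _ => hfib i)
      exact ⟨j0, Finset.mem_univ _, lt_of_le_of_ne (hfib j0) hj0⟩
    simp at hlt
    omega
  have hex : ∀ j : Fin n, ∃ r : Fin 2, (r, j) ∈ S ∧ ∀ r' : Fin 2, (r', j) ∈ S → r' = r := by
    intro j
    obtain ⟨v, hv⟩ := Finset.card_eq_one.1 (hone j)
    have hv1 : v ∈ S.filter (fun v => v.2 = j) := by rw [hv]; exact Finset.mem_singleton_self v
    rcases Finset.mem_filter.1 hv1 with ⟨hvS, hv2⟩
    refine ⟨v.1, by rw [← hv2]; exact hvS, ?_⟩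
    intro r' hr'
    have hm : ((r', j) : Fin 2 × Fin n) ∈ S.filter (fun v => v.2 = j) :=
      Finset.mem_filter.2 ⟨hr', rfl⟩
    rw [hv, Finset.mem_singleton] at hm
    exact congrArg Prod.fst hm
  choose r hr hr' using hex
  have halt : ∀ (j : ℕ) (h : j + 1 < n),
      r ⟨j + 1, h⟩ ≠ r ⟨j, by omega⟩ := by
    intro j h heq
    have hadj : (gridGraph 2 n).Adj (r ⟨j, by omega⟩, ⟨j, by omega⟩) (r ⟨j+1, h⟩, ⟨j+1, h⟩) := by
      left
      exact ⟨heq.symm, Or.inl rfl⟩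
    exact hind _ (hr _) _ (hr _) hadj
  have h0 : (0 : ℕ) < n := by omega
  set p : ℕ := (r ⟨0, h0⟩ : Fin 2).1 with hp
  have hple : p < 2 := (r ⟨0, h0⟩).2
  have hform : ∀ (j : ℕ) (h : j < n), ((r ⟨j, h⟩ : Fin 2) : ℕ) = (p + j) % 2 := by
    intro j
    induction j with
    | zero => intro h; omega
    | succ k ih =>
      intro h
      have hk : k < n := by omega
      have h1 := ih hk
      have h2 := halt k h
      have hv1 := (r ⟨k + 1, h⟩).2
      have hv2 := (r ⟨k, hk⟩).2
      have hne : ((r ⟨k+1, h⟩ : Fin 2) : ℕ) ≠ ((r ⟨k, hk⟩ : Fin 2) : ℕ) :=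
        fun he => h2 (Fin.ext he)
      omega
  have hmem : ∀ v : Fin 2 × Fin n, v ∈ S → ((v.1.1 : ℕ) + v.2.1) % 2 = p % 2 := by
    intro v hv
    have h1 : v.1 = r v.2 := hr' v.2 v.1 (by simpa using hv)
    have h2 := hform v.2.1 v.2.2
    rw [h1]
    have he : (⟨v.2.1, v.2.2⟩ : Fin n) = v.2 := Fin.eta _ _
    rw [he] at h2
    omega
  have hcase : p = 0 ∨ p = 1 := by omega
  rcases hcase with hp0 | hp1
  · left
    apply Finset.eq_of_subset_of_card_le
    · intro v hv
      rw [mem_Av]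
      have := hmem v hv
      omega
    · rw [card_Av, hcard]
  · right
    apply Finset.eq_of_subset_of_card_le
    · intro v hv
      rw [mem_Bv]
      have := hmem v hv
      omega
    · rw [card_Bv, hcard]

lemma mem_K {n : ℕ} (hn : 2 ≤ n) (σ : Finset (Fin 2 × Fin n)) :
    σ ∈ totalCutComplex (gridGraph 2 n) n ↔ σ ⊆ Av n ∨ σ ⊆ Bv n := by
  constructor
  · rintro ⟨S, hsub, hcard, hind⟩
    have hkey : ∀ x ∈ σ, x ∉ S := by
      intro x hx hxS
      have hc := hsub hxS
      simp only [Finset.mem_compl] at hc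
      exact hc hx
    rcases indep_classify hn S hind hcard with h | h
    · right
      intro x hx
      have hxA : x ∉ Av n := fun hc => hkey x hx (h ▸ hc)
      rw [mem_Av] at hxA
      rw [mem_Bv]
      omega
    · left
      intro x hx
      have hxB : x ∉ Bv n := fun hc => hkey x hx (h ▸ hc)
      rw [mem_Bv] at hxB
      rw [mem_Av]
      omega
  · rintro (h | h)
    · refine ⟨Bv n, ?_, card_Bv n, indep_Bv n⟩
      intro x hxB
      simp only [Finset.mem_compl]
      intro hxσ
      have hA := h hxσ
      rw [mem_Av] at hA; rw [mem_Bv] at hxB; omega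
    · refine ⟨Av n, ?_, card_Av n, indep_Av n⟩
      intro x hxA
      simp only [Finset.mem_compl]
      intro hxσ
      have hB := h hxσ
      rw [mem_Bv] at hB; rw [mem_Av] at hxA; omega

lemma Av_mem_K {n : ℕ} (hn : 2 ≤ n) : Av n ∈ totalCutComplex (gridGraph 2 n) n :=
  (mem_K hn _).2 (Or.inl (le_refl _))
lemma Bv_mem_K {n : ℕ} (hn : 2 ≤ n) : Bv n ∈ totalCutComplex (gridGraph 2 n) n :=
  (mem_K hn _).2 (Or.inr (le_refl _))

lemma av_mem {n : ℕ} (hn : 2 ≤ n) : ((0 : Fin 2), (⟨0, by omega⟩ : Fin n)) ∈ Av n := by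
  simp [mem_Av]
lemma bv_mem {n : ℕ} (hn : 2 ≤ n) : ((1 : Fin 2), (⟨0, by omega⟩ : Fin n)) ∈ Bv n := by
  simp [mem_Bv]

lemma disj_AB (n : ℕ) : Disjoint (Av n) (Bv n) := by
  rw [Finset.disjoint_left]
  intro v hv hv'
  rw [mem_Av] at hv; rw [mem_Bv] at hv'; omega

lemma facets_eq {n : ℕ} (hn : 2 ≤ n) :
    {σ : Finset (Fin 2 × Fin n) | IsFacet (totalCutComplex (gridGraph 2 n) n) σ} =
      {Av n, Bv n} := by
  ext σ
  simp only [Set.mem_setOf_eq, Set.mem_insert_iff, Set.mem_singleton_iff]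
  constructor
  · rintro ⟨hσK, hmax⟩
    rcases (mem_K hn σ).1 hσK with h | h
    · exact Or.inl (hmax _ (Av_mem_K hn) h)
    · exact Or.inr (hmax _ (Bv_mem_K hn) h)
  · rintro (rfl | rfl)
    · refine ⟨Av_mem_K hn, ?_⟩
      intro τ hτ hsub
      rcases (mem_K hn τ).1 hτ with h | h
      · exact Finset.Subset.antisymm hsub h
      · exact absurd (h (hsub (av_mem hn)))
          (fun hb => (Finset.disjoint_left.1 (disj_AB n)) (av_mem hn) hb)
    · refine ⟨Bv_mem_K hn, ?_⟩
      intro τ hτ hsub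
      rcases (mem_K hn τ).1 hτ with h | h
      · exact absurd (h (hsub (bv_mem hn)))
          (fun ha => (Finset.disjoint_left.1 (disj_AB n)) ha (bv_mem hn))
      · exact Finset.Subset.antisymm hsub h

section Topology

noncomputable def gm (n : ℕ) (f : Fin 2 × Fin n → ℝ) : ℝ :=
  ∑ v ∈ Av n, f v - ∑ v ∈ Bv n, f v

lemma union_AB (n : ℕ) : ∀ v : Fin 2 × Fin n, v ∈ Av n ∨ v ∈ Bv n := by
  intro v
  rw [mem_Av, mem_Bv]
  omega

lemma sum_split (n : ℕ) (f : Fin 2 × Fin n → ℝ) :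
    ∑ v, f v = ∑ v ∈ Av n, f v + ∑ v ∈ Bv n, f v := by
  classical
  rw [← Finset.sum_union (disj_AB n)]
  apply Finset.sum_congr _ (fun _ _ => rfl)
  ext v
  simp only [Finset.mem_univ, true_iff, Finset.mem_union]
  exact union_AB n v

lemma supp_cases {n : ℕ} (hn : 2 ≤ n) {f : Fin 2 × Fin n → ℝ}
    (hf : f ∈ geomReal (totalCutComplex (gridGraph 2 n) n)) :
    (∀ v, f v ≠ 0 → v ∈ Av n) ∨ (∀ v, f v ≠ 0 → v ∈ Bv n) := by
  obtain ⟨σ, hσ, hsupp⟩ := hf.2.2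
  rcases (mem_K hn σ).1 hσ with h | h
  · exact Or.inl fun v hv => h (hsupp v hv)
  · exact Or.inr fun v hv => h (hsupp v hv)

lemma gm_one {n : ℕ} {f : Fin 2 × Fin n → ℝ} (hsum : ∑ v, f v = 1)
    (hsupp : ∀ v, f v ≠ 0 → v ∈ Av n) : gm n f = 1 := by
  have hB : ∑ v ∈ Bv n, f v = 0 := by
    apply Finset.sum_eq_zero
    intro v hv
    by_contra h
    exact Finset.disjoint_left.1 (disj_AB n) (hsupp v h) hv
  have hA : ∑ v ∈ Av n, f v = 1 := by
    have := sum_split n f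
    rw [hsum, hB] at this
    linarith
  unfold gm
  rw [hA, hB]
  ring

lemma gm_neg_one {n : ℕ} {f : Fin 2 × Fin n → ℝ} (hsum : ∑ v, f v = 1)
    (hsupp : ∀ v, f v ≠ 0 → v ∈ Bv n) : gm n f = -1 := by
  have hA : ∑ v ∈ Av n, f v = 0 := by
    apply Finset.sum_eq_zero
    intro v hv
    by_contra h
    exact Finset.disjoint_left.1 (disj_AB n) hv (hsupp v h)
  have hB : ∑ v ∈ Bv n, f v = 1 := by
    have := sum_split n f
    rw [hsum, hA] at this
    linarith
  unfold gm
  rw [hA, hB]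
  ring

def avP (n : ℕ) (hn : 2 ≤ n) : Fin 2 × Fin n := ((0 : Fin 2), ⟨0, by omega⟩)
def bvP (n : ℕ) (hn : 2 ≤ n) : Fin 2 × Fin n := ((1 : Fin 2), ⟨0, by omega⟩)

lemma avP_mem {n : ℕ} (hn : 2 ≤ n) : avP n hn ∈ Av n := av_mem hn
lemma bvP_mem {n : ℕ} (hn : 2 ≤ n) : bvP n hn ∈ Bv n := bv_mem hn

lemma avP_ne_bvP {n : ℕ} (hn : 2 ≤ n) : avP n hn ≠ bvP n hn := by
  intro h
  have := congrArg (fun v : Fin 2 × Fin n => (v.1 : ℕ)) h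
  simp [avP, bvP] at this

noncomputable def psiFun (n : ℕ) (hn : 2 ≤ n) (c : ℝ) : Fin 2 × Fin n → ℝ :=
  fun v => (if v = avP n hn then max c 0 else 0) + (if v = bvP n hn then max (-c) 0 else 0)

lemma psiFun_nonneg (n : ℕ) (hn : 2 ≤ n) (c : ℝ) (v : Fin 2 × Fin n) :
    0 ≤ psiFun n hn c v := by
  unfold psiFun
  apply add_nonneg <;> (split_ifs <;> simp [le_max_right])

lemma psiFun_sum (n : ℕ) (hn : 2 ≤ n) (c : ℝ) :
    ∑ v, psiFun n hn c v = max c 0 + max (-c) 0 := by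
  classical
  unfold psiFun
  rw [Finset.sum_add_distrib, Finset.sum_ite_eq' Finset.univ (avP n hn),
    Finset.sum_ite_eq' Finset.univ (bvP n hn)]
  simp

lemma psiFun_mem {n : ℕ} (hn : 2 ≤ n) {c : ℝ} (hc : c = 1 ∨ c = -1) :
    psiFun n hn c ∈ geomReal (totalCutComplex (gridGraph 2 n) n) := by
  refine ⟨psiFun_nonneg n hn c, ?_, ?_⟩
  · rw [psiFun_sum]
    rcases hc with rfl | rfl <;> norm_num
  · rcases hc with rfl | rfl
    · refine ⟨Av n, Av_mem_K hn, ?_⟩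
      intro v hv
      unfold psiFun at hv
      by_contra hvA
      apply hv
      have hva : v ≠ avP n hn := fun h => hvA (h ▸ avP_mem hn)
      rw [if_neg hva]
      split_ifs <;> norm_num
    · refine ⟨Bv n, Bv_mem_K hn, ?_⟩
      intro v hv
      unfold psiFun at hv
      by_contra hvB
      apply hv
      have hvb : v ≠ bvP n hn := fun h => hvB (h ▸ bvP_mem hn)
      rw [if_neg hvb]
      split_ifs <;> norm_num

lemma gm_psiFun (n : ℕ) (hn : 2 ≤ n) (c : ℝ) : gm n (psiFun n hn c) = max c 0 - max (-c) 0 := by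
  classical
  unfold gm psiFun
  rw [Finset.sum_add_distrib, Finset.sum_add_distrib,
    Finset.sum_ite_eq' (Av n) (avP n hn), Finset.sum_ite_eq' (Av n) (bvP n hn),
    Finset.sum_ite_eq' (Bv n) (avP n hn), Finset.sum_ite_eq' (Bv n) (bvP n hn)]
  rw [if_pos (avP_mem hn), if_pos (bvP_mem hn),
    if_neg (fun h => Finset.disjoint_left.1 (disj_AB n) (avP_mem hn) h),
    if_neg (fun h => Finset.disjoint_left.1 (disj_AB n) h (bvP_mem hn))]
  ring

lemma sphere_cases (x : ↥(nSphere 0)) : x.val 0 = 1 ∨ x.val 0 = -1 := by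
  have hx : ‖x.val‖ = 1 := mem_sphere_zero_iff_norm.1 x.2
  have h1 : |x.val 0| = 1 := by
    rw [EuclideanSpace.norm_eq, Fin.sum_univ_one, Real.norm_eq_abs, sq_abs,
      Real.sqrt_sq_eq_abs] at hx
    exact hx
  rcases (abs_eq (by norm_num)).1 h1 with h | h
  · exact Or.inl h
  · exact Or.inr h

noncomputable def phiMap (n : ℕ) (hn : 2 ≤ n) :
    C(↥(geomReal (totalCutComplex (gridGraph 2 n) n)), ↥(nSphere 0)) where
  toFun f := ⟨EuclideanSpace.single 0 (gm n f.val), by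
    rw [nSphere, mem_sphere_zero_iff_norm, EuclideanSpace.norm_single]
    rcases supp_cases hn f.2 with h | h
    · rw [gm_one f.2.2.1 h]; norm_num
    · rw [gm_neg_one f.2.2.1 h]; norm_num⟩
  continuous_toFun := by
    apply Continuous.subtype_mk
    exact ((Isometry.of_dist_eq fun a b =>
      EuclideanSpace.dist_single_same (𝕜 := ℝ) (ι := Fin 1) 0 a b).continuous).comp
      ((continuous_finset_sum _ fun v _ => (continuous_apply v).comp continuous_subtype_val).sub
       (continuous_finset_sum _ fun v _ => (continuous_apply v).comp continuous_subtype_val))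

noncomputable def psiMap (n : ℕ) (hn : 2 ≤ n) :
    C(↥(nSphere 0), ↥(geomReal (totalCutComplex (gridGraph 2 n) n))) where
  toFun x := ⟨psiFun n hn (x.val 0), psiFun_mem hn (sphere_cases x)⟩
  continuous_toFun := by
    apply Continuous.subtype_mk
    apply continuous_pi
    intro v
    unfold psiFun
    have hev : Continuous fun x : ↥(nSphere 0) => x.val 0 :=
      (continuous_apply (0 : Fin 1)).comp ((PiLp.continuous_ofLp 2 _).comp continuous_subtype_val)
    apply Continuous.add <;> split_ifs
    · exact (continuous_max.comp (hev.prodMk continuous_const))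
    · exact continuous_const
    · exact (continuous_max.comp ((hev.neg).prodMk continuous_const))
    · exact continuous_const

lemma phiMap_psiMap (n : ℕ) (hn : 2 ≤ n) :
    (phiMap n hn).comp (psiMap n hn) = ContinuousMap.id _ := by
  ext x i
  show (EuclideanSpace.single (0 : Fin 1) (gm n (psiFun n hn (x.val 0)))) i = x.val i
  have hi : i = 0 := Fin.fin_one_eq_zero i
  subst hi
  rw [gm_psiFun, EuclideanSpace.single_apply, if_pos rfl]
  rcases sphere_cases x with h | h <;> rw [h] <;> norm_num

end Topology

lemma psiFun_supp_one {n : ℕ} (hn : 2 ≤ n) (v : Fin 2 × Fin n)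
    (hv : psiFun n hn 1 v ≠ 0) : v ∈ Av n := by
  by_contra hvA
  apply hv
  unfold psiFun
  have hva : v ≠ avP n hn := fun h => hvA (h ▸ avP_mem hn)
  rw [if_neg hva]
  split_ifs <;> norm_num

lemma psiFun_supp_neg_one {n : ℕ} (hn : 2 ≤ n) (v : Fin 2 × Fin n)
    (hv : psiFun n hn (-1) v ≠ 0) : v ∈ Bv n := by
  by_contra hvB
  apply hv
  unfold psiFun
  have hvb : v ≠ bvP n hn := fun h => hvB (h ▸ bvP_mem hn)
  rw [if_neg hvb]
  split_ifs <;> norm_num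

lemma comp_val {n : ℕ} (hn : 2 ≤ n)
    (f : ↥(geomReal (totalCutComplex (gridGraph 2 n) n))) :
    (((psiMap n hn).comp (phiMap n hn)) f).val = psiFun n hn (gm n f.val) := by
  show psiFun n hn ((EuclideanSpace.single (0 : Fin 1) (gm n f.val)) 0) = _
  rw [EuclideanSpace.single_apply, if_pos rfl]

lemma combo_mem {n : ℕ} (hn : 2 ≤ n) (t : ℝ) (ht0 : 0 ≤ t) (ht1 : t ≤ 1)
    (f : ↥(geomReal (totalCutComplex (gridGraph 2 n) n))) :
    (fun v => (1 - t) * (((psiMap n hn).comp (phiMap n hn)) f).val v + t * f.val v) ∈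
      geomReal (totalCutComplex (gridGraph 2 n) n) := by
  set g := ((psiMap n hn).comp (phiMap n hn)) f with hg
  refine ⟨?_, ?_, ?_⟩
  · intro v
    exact add_nonneg (mul_nonneg (by linarith) (g.2.1 v)) (mul_nonneg ht0 (f.2.1 v))
  · rw [Finset.sum_add_distrib, ← Finset.mul_sum, ← Finset.mul_sum, g.2.2.1, f.2.2.1]
    ring
  · have hsupp : ∀ v, (1 - t) * g.val v + t * f.val v ≠ 0 → g.val v ≠ 0 ∨ f.val v ≠ 0 := by
      intro v hv
      by_contra hc
      push_neg at hc
      apply hv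
      rw [hc.1, hc.2]
      ring
    rcases supp_cases hn f.2 with h | h
    · refine ⟨Av n, Av_mem_K hn, ?_⟩
      intro v hv
      have hgm : gm n f.val = 1 := gm_one f.2.2.1 h
      rcases hsupp v hv with h' | h'
      · rw [comp_val hn, hgm] at h'
        exact psiFun_supp_one hn v h'
      · exact h v h'
    · refine ⟨Bv n, Bv_mem_K hn, ?_⟩
      intro v hv
      have hgm : gm n f.val = -1 := gm_neg_one f.2.2.1 h
      rcases hsupp v hv with h' | h'
      · rw [comp_val hn, hgm] at h'
        exact psiFun_supp_neg_one hn v h'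
      · exact h v h'

noncomputable def Hmt (n : ℕ) (hn : 2 ≤ n) :
    ContinuousMap.Homotopy ((psiMap n hn).comp (phiMap n hn))
      (ContinuousMap.id ↥(geomReal (totalCutComplex (gridGraph 2 n) n))) where
  toFun p := ⟨fun v => (1 - (p.1 : ℝ)) * (((psiMap n hn).comp (phiMap n hn)) p.2).val v
      + (p.1 : ℝ) * p.2.val v, combo_mem hn p.1 p.1.2.1 p.1.2.2 p.2⟩
  continuous_toFun := by
    apply Continuous.subtype_mk
    apply continuous_pi
    intro v
    have hc1 : Continuous fun p : unitInterval ×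
        ↥(geomReal (totalCutComplex (gridGraph 2 n) n)) => (p.1 : ℝ) :=
      continuous_subtype_val.comp continuous_fst
    have hΨ : Continuous fun p : unitInterval ×
        ↥(geomReal (totalCutComplex (gridGraph 2 n) n)) =>
        (((psiMap n hn).comp (phiMap n hn)) p.2).val v :=
      (continuous_apply v).comp (continuous_subtype_val.comp
        (((psiMap n hn).comp (phiMap n hn)).continuous.comp continuous_snd))
    have hf : Continuous fun p : unitInterval ×
        ↥(geomReal (totalCutComplex (gridGraph 2 n) n)) => p.2.val v :=
      (continuous_apply v).comp (continuous_subtype_val.comp continuous_snd)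
    exact ((continuous_const.sub hc1).mul hΨ).add (hc1.mul hf)
  map_zero_left x := by
    apply Subtype.ext
    funext v
    simp
  map_one_left x := by
    apply Subtype.ext
    funext v
    simp

theorem totalCutComplex_grid_two_top' (n : ℕ) (hn : 2 ≤ n) :
    {σ : Finset (Fin 2 × Fin n) | IsFacet (totalCutComplex (gridGraph 2 n) n) σ} =
      {Finset.univ.filter (fun v : Fin 2 × Fin n => (v.1.1 + v.2.1) % 2 = 0),
       Finset.univ.filter (fun v : Fin 2 × Fin n => (v.1.1 + v.2.1) % 2 = 1)} ∧
    Disjoint (Finset.univ.filter (fun v : Fin 2 × Fin n => (v.1.1 + v.2.1) % 2 = 0))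
      (Finset.univ.filter (fun v : Fin 2 × Fin n => (v.1.1 + v.2.1) % 2 = 1)) ∧
    Nonempty (ContinuousMap.HomotopyEquiv
      ↥(geomReal (totalCutComplex (gridGraph 2 n) n)) ↥(nSphere 0)) := by
  refine ⟨facets_eq hn, disj_AB n, ⟨?_⟩⟩
  exact ContinuousMap.HomotopyEquiv.mk (phiMap n hn) (psiMap n hn)
    ⟨Hmt n hn⟩ (by rw [phiMap_psiMap])
/-- For `n = k ≥ 2`, the total `n`-cut complex of the `2 × n` grid graph has
exactly two facets, the two alternating (checkerboard) transversals, which are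
disjoint; hence the complex is homotopy equivalent to `S⁰`.
(Rows: `0 = a`, `1 = b`; columns are `0`-indexed.) -/
theorem totalCutComplex_grid_two_top (n : ℕ) (hn : 2 ≤ n) :
    {σ : Finset (Fin 2 × Fin n) | IsFacet (totalCutComplex (gridGraph 2 n) n) σ} =
      {Finset.univ.filter (fun v : Fin 2 × Fin n => (v.1.1 + v.2.1) % 2 = 0),
       Finset.univ.filter (fun v : Fin 2 × Fin n => (v.1.1 + v.2.1) % 2 = 1)} ∧
    Disjoint (Finset.univ.filter (fun v : Fin 2 × Fin n => (v.1.1 + v.2.1) % 2 = 0))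
      (Finset.univ.filter (fun v : Fin 2 × Fin n => (v.1.1 + v.2.1) % 2 = 1)) ∧
    Nonempty (ContinuousMap.HomotopyEquiv
      ↥(geomReal (totalCutComplex (gridGraph 2 n) n)) ↥(nSphere 0)) := by
  exact totalCutComplex_grid_two_top' n hn
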